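/- arXiv:2410.18706 — 2 statements merged into one kernel-verified Lean document; each statement's English description precedes it below -/
import Mathlib

section
/- Let d ≥ 3 and let λ₁, λ₂, λ₃ ∈ ℂ[X₀,X₁]_1 be pairwise linearly independent linear forms. Then the Waring rank of the binary form P := λ₁^{d−2} λ₂ λ₃ of degree d satisfies rk(P) = d − 1. -/
/-!
Common definitions: the apolar action of `ℂ[X₀,X₁]` on itself
(`Q • P := Q(∂/∂X₀, ∂/∂X₁)(P)`), the apolar ideal `Ann(P)` and its homogeneous
components, the cokernel `C_P^d` of `Q ↦ Q • P : ℂ[X₀,X₁]_d → ℂ[X₀,X₁]_{l-d}`,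
the invariant `d₁(P)` and the Waring rank.
-/

open MvPolynomial

noncomputable section

/-- The partial derivative `∂/∂Xᵢ` as a `ℂ`-linear endomorphism of `ℂ[X₀,X₁]`. -/
def pd (i : Fin 2) : Module.End ℂ (MvPolynomial (Fin 2) ℂ) := (pderiv (R := ℂ) i).toLinearMap

lemma pd_comm : Commute (pd 0) (pd 1) := by
  apply LinearMap.ext
  intro P
  induction P using MvPolynomial.induction_on' with
  | monomial s a =>
      simp [pd, Module.End.mul_apply, pderiv_monomial]
      rw [tsub_right_comm, mul_right_comm]
  | add p q hp hq => simp_all [Module.End.mul_apply, map_add]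

/-- The endomorphism `∂₀^{m 0} ∘ ∂₁^{m 1}` of `ℂ[X₀,X₁]`, as a monoid homomorphism in the
exponent `m`. -/
def derivMonomialHom :
    Multiplicative (Fin 2 →₀ ℕ) →* Module.End ℂ (MvPolynomial (Fin 2) ℂ) where
  toFun m := pd 0 ^ (Multiplicative.toAdd m 0) * pd 1 ^ (Multiplicative.toAdd m 1)
  map_one' := by simp
  map_mul' a b := by
    simp only [toAdd_mul, Finsupp.add_apply, pow_add]
    exact (Commute.pow_pow pd_comm _ _).mul_mul_mul_comm _ _

/-- The representation of `ℂ[X₀,X₁]` by constant-coefficient differential operators: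
`diffOp Q = Q(∂/∂X₀, ∂/∂X₁)`.  It is the morphism of `ℂ`-algebras sending `X i` to
`∂/∂Xᵢ`. -/
def diffOp : MvPolynomial (Fin 2) ℂ →ₐ[ℂ] Module.End ℂ (MvPolynomial (Fin 2) ℂ) :=
  AddMonoidAlgebra.lift ℂ _ (Fin 2 →₀ ℕ) derivMonomialHom

/-- The apolar action `Q • P := Q(∂/∂X₀, ∂/∂X₁)(P)`. -/
def apolar (Q P : MvPolynomial (Fin 2) ℂ) : MvPolynomial (Fin 2) ℂ := diffOp Q P

/-- For fixed `P`, the map `Q ↦ Q • P` is `ℂ`-linear in `Q`. -/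
def apolarLM (P : MvPolynomial (Fin 2) ℂ) :
    MvPolynomial (Fin 2) ℂ →ₗ[ℂ] MvPolynomial (Fin 2) ℂ :=
  (LinearMap.applyₗ P).comp diffOp.toLinearMap

lemma apolarLM_apply (P Q : MvPolynomial (Fin 2) ℂ) : apolarLM P Q = apolar Q P := rfl

/-- The apolar ideal `Ann(P) = {Q | Q • P = 0}`. -/
def annIdeal (P : MvPolynomial (Fin 2) ℂ) : Ideal (MvPolynomial (Fin 2) ℂ) where
  carrier := {Q | apolar Q P = 0}
  zero_mem' := by simp [apolar]
  add_mem' := by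
    intro a b ha hb
    simp only [Set.mem_setOf_eq, apolar, map_add, LinearMap.add_apply] at *
    rw [ha, hb, add_zero]
  smul_mem' := by
    intro c Q hQ
    simp only [Set.mem_setOf_eq, smul_eq_mul, apolar, map_mul, Module.End.mul_apply] at *
    rw [hQ, map_zero]

/-- The degree-`d` homogeneous component `Ann(P)_d` of the apolar ideal of `P`. -/
def annComp (P : MvPolynomial (Fin 2) ℂ) (d : ℕ) :
    Submodule ℂ (MvPolynomial (Fin 2) ℂ) :=
  homogeneousSubmodule (Fin 2) ℂ d ⊓ LinearMap.ker (apolarLM P)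

/-- The image of `ℂ[X₀,X₁]_d` under `Q ↦ Q • P`, viewed as a subspace of `ℂ[X₀,X₁]_{l-d}`
(for `P` homogeneous of degree `l` and `d ≤ l` the image is indeed contained in
`ℂ[X₀,X₁]_{l-d}`). -/
def apolarImage (P : MvPolynomial (Fin 2) ℂ) (l d : ℕ) :
    Submodule ℂ (homogeneousSubmodule (Fin 2) ℂ (l - d)) :=
  Submodule.comap (homogeneousSubmodule (Fin 2) ℂ (l - d)).subtype
    (Submodule.map (apolarLM P) (homogeneousSubmodule (Fin 2) ℂ d))

/-- `C_P^d`: the cokernel of the `ℂ`-linear map `ℂ[X₀,X₁]_d → ℂ[X₀,X₁]_{l-d}`, `Q ↦ Q • P`. -/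
abbrev ApolarCoker (P : MvPolynomial (Fin 2) ℂ) (l d : ℕ) :=
  (homogeneousSubmodule (Fin 2) ℂ (l - d)) ⧸ apolarImage P l d

/-- `d₁(P)`: the minimal degree of a nonzero homogeneous polynomial in `Ann(P)`. -/
def d1 (P : MvPolynomial (Fin 2) ℂ) : ℕ :=
  sInf {d | ∃ Q : MvPolynomial (Fin 2) ℂ, Q ≠ 0 ∧ Q.IsHomogeneous d ∧ apolar Q P = 0}

/-- The Waring rank of a binary form `P` of degree `l`: the least `r` such that `P` is a sum
of `r` `l`-th powers of linear forms. -/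
def waringRank (l : ℕ) (P : MvPolynomial (Fin 2) ℂ) : ℕ :=
  sInf {r | ∃ lam : Fin r → MvPolynomial (Fin 2) ℂ,
    (∀ i, (lam i).IsHomogeneous 1) ∧ P = ∑ i, lam i ^ l}

end

noncomputable section Aux

open MvPolynomial

abbrev R2 := MvPolynomial (Fin 2) ℂ

/-- The exponent Finsupp `(a, b)`. -/
def mn (a b : ℕ) : Fin 2 →₀ ℕ := Finsupp.single 0 a + Finsupp.single 1 b

@[simp] lemma mn_apply_zero (a b : ℕ) : mn a b 0 = a := by
  simp [mn, Finsupp.single_apply]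

@[simp] lemma mn_apply_one (a b : ℕ) : mn a b 1 = b := by
  simp [mn, Finsupp.single_apply]

lemma fin2_finsupp_eq (m : Fin 2 →₀ ℕ) : m = mn (m 0) (m 1) := by
  ext i
  fin_cases i <;> simp

lemma mn_degree (a b : ℕ) : (mn a b).degree = a + b := by
  rw [Finsupp.degree_apply]
  rw [Finset.sum_subset (Finset.subset_univ _) (by
    intro x _ hx
    simpa using Finsupp.notMem_support_iff.mp hx)]
  simp [Fin.sum_univ_two]

lemma mn_single0 (a : ℕ) : mn a 0 = Finsupp.single 0 a := by
  simp [mn]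

lemma degree_eq_of_isHomogeneous {P : R2} {n : ℕ} (h : P.IsHomogeneous n)
    {m : Fin 2 →₀ ℕ} (hm : m ∈ P.support) : m 0 + m 1 = n := by
  have := h (MvPolynomial.mem_support_iff.mp hm)
  change (Finsupp.weight (fun _ => (1:ℕ))) m = n at this
  rw [← Finsupp.degree_eq_weight_one] at this
  rw [← mn_degree (m 0) (m 1), ← fin2_finsupp_eq m]
  exact this

lemma pd_pow_monomial (i : Fin 2) (k : ℕ) (m : Fin 2 →₀ ℕ) (c : ℂ) :
    (pd i ^ k) (monomial m c) =
      monomial (m - Finsupp.single i k) (((m i).descFactorial k : ℂ) * c) := by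
  induction k with
  | zero => simp
  | succ k ih =>
      rw [pow_succ', Module.End.mul_apply, ih]
      rw [pd]
      show pderiv i (monomial _ _) = _
      rw [pderiv_monomial]
      rw [Finsupp.tsub_apply, Finsupp.single_eq_same]
      rw [tsub_tsub, ← Finsupp.single_add]
      congr 1
      rw [Nat.descFactorial_succ]
      push_cast
      ring

lemma diffOp_monomial (m : Fin 2 →₀ ℕ) (c : ℂ) :
    diffOp (monomial m c) = c • (pd 0 ^ (m 0) * pd 1 ^ (m 1)) := by
  have h := AddMonoidAlgebra.lift_single (R := ℂ) (M := Fin 2 →₀ ℕ)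
    (A := Module.End ℂ (MvPolynomial (Fin 2) ℂ)) derivMonomialHom m c
  rw [diffOp]
  refine Eq.trans (by exact h) ?_
  rfl

lemma apolar_monomial_monomial (m s : Fin 2 →₀ ℕ) (c b : ℂ) :
    apolar (monomial m c) (monomial s b) =
      monomial (s - m) ((((s 0).descFactorial (m 0) * (s 1).descFactorial (m 1) : ℕ) : ℂ)
        * (c * b)) := by
  rw [apolar, diffOp_monomial]
  show c • ((pd 0 ^ m 0) ((pd 1 ^ m 1) (monomial s b))) = _
  rw [pd_pow_monomial, pd_pow_monomial]
  rw [Finsupp.tsub_apply]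
  rw [show Finsupp.single 1 (m 1) (0 : Fin 2) = 0 by simp, tsub_zero]
  rw [tsub_tsub]
  rw [show Finsupp.single 1 (m 1) + Finsupp.single 0 (m 0) = m by
    ext i; fin_cases i <;> simp]
  rw [MvPolynomial.smul_monomial]
  rw [smul_eq_mul]
  congr 1
  push_cast
  ring

lemma apolar_sum_left {ι : Type*} (S : Finset ι) (f : ι → R2) (P : R2) :
    apolar (∑ i ∈ S, f i) P = ∑ i ∈ S, apolar (f i) P := by
  simp only [apolar, map_sum, LinearMap.coe_sum, Finset.sum_apply]

lemma apolar_eq_sum_support (F P : R2) :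
    apolar F P = ∑ m ∈ F.support, apolar (monomial m (coeff m F)) P := by
  conv_lhs => rw [F.as_sum]
  exact apolar_sum_left _ _ _

end Aux
noncomputable section Aux2

open MvPolynomial

lemma diffOp_X (i : Fin 2) : diffOp (X i) = pd i := by
  have h := diffOp_monomial (Finsupp.single i 1) 1
  rw [← X_pow_eq_monomial, pow_one] at h
  rw [h]
  fin_cases i <;> simp [Finsupp.single_apply]

lemma apolar_lin (s t : ℂ) (P : R2) :
    apolar (C s * X 0 + C t * X 1) P = s • (pderiv 0 P) + t • (pderiv 1 P) := by
  rw [apolar, map_add, map_mul, map_mul, diffOp_X, diffOp_X]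
  have hc : ∀ a : ℂ, diffOp (C a) = a • (1 : Module.End ℂ (MvPolynomial (Fin 2) ℂ)) := by
    intro a
    rw [show (C a : R2) = algebraMap ℂ R2 a from rfl, AlgHom.commutes]
    exact Algebra.algebraMap_eq_smul_one a
  rw [hc, hc]
  simp only [LinearMap.add_apply, Module.End.mul_apply, LinearMap.smul_apply,
    Module.End.one_apply]
  rfl

/-- the dual linear (differential) form of a direction -/
def dual (o : Option ℂ) : R2 := o.elim (X 1) (fun t => X 0 - C t * X 1)

/-- the d-th power of the (normalized) linear form with direction `o` -/
def dpow (d : ℕ) (o : Option ℂ) : R2 := o.elim (X 0 ^ d) (fun t => (C t * X 0 + X 1) ^ d)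

lemma dual_isHomogeneous (o : Option ℂ) : (dual o).IsHomogeneous 1 := by
  cases o with
  | none => exact isHomogeneous_X _ _
  | some t => exact (isHomogeneous_X _ _).sub (isHomogeneous_C_mul_X t 1)

lemma apolar_dual_dpow (d : ℕ) (o : Option ℂ) : apolar (dual o) (dpow d o) = 0 := by
  cases o with
  | none =>
      show apolar (X 1) (X 0 ^ d) = 0
      have he : (X 1 : R2) = C 0 * X 0 + C 1 * X 1 := by simp
      rw [he, apolar_lin, Derivation.leibniz_pow]
      simp
  | some t =>
      show apolar (X 0 - C t * X 1) ((C t * X 0 + X 1) ^ d) = 0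
      have he : (X 0 - C t * X 1 : R2) = C 1 * X 0 + C (-t) * X 1 := by
        rw [map_one, map_neg, one_mul, neg_mul]; ring
      have h0 : pderiv (R := ℂ) 0 ((C t * X 0 + X 1 : R2) ^ d)
          = d • ((C t * X 0 + X 1 : R2) ^ (d - 1)) • (C t : R2) := by
        rw [Derivation.leibniz_pow]
        congr 1
        congr 1
        simp
      have h1 : pderiv (R := ℂ) 1 ((C t * X 0 + X 1 : R2) ^ d)
          = d • ((C t * X 0 + X 1 : R2) ^ (d - 1)) • (1 : R2) := by
        rw [Derivation.leibniz_pow]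
        congr 1
        congr 1
        simp
      rw [he, apolar_lin, h0, h1]
      simp only [one_smul, smul_eq_mul, nsmul_eq_mul, MvPolynomial.smul_eq_C_mul, map_neg]
      ring

lemma apolar_prod_eq_zero {ι : Type*} [DecidableEq ι] {S : Finset ι} {f : ι → R2} {o : ι}
    (ho : o ∈ S) {Q : R2} (h : apolar (f o) Q = 0) :
    apolar (∏ i ∈ S, f i) Q = 0 := by
  rw [← Finset.prod_erase_mul S f ho, apolar, map_mul, Module.End.mul_apply]
  show diffOp _ (apolar (f o) Q) = 0
  rw [h, map_zero]

end Aux2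
noncomputable section Aux3

open MvPolynomial

lemma coeff_prod_dual_top (S : Finset (Option ℂ)) (h : none ∉ S) :
    coeff (mn S.card 0) (∏ o ∈ S, dual o) = 1 := by
  classical
  induction S using Finset.induction_on with
  | empty => simp [mn]
  | insert o S hoS ih =>
      have ho : o ∉ S := hoS
      rw [Finset.prod_insert ho, Finset.card_insert_of_notMem ho]
      have hnone : none ∉ S := fun hc => h (Finset.mem_insert_of_mem hc)
      obtain ⟨t, rfl⟩ : ∃ t, o = some t := by
        cases o with
        | none => exact absurd (Finset.mem_insert_self _ _) h
        | some t => exact ⟨t, rfl⟩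
      rw [show dual (some t) = X 0 - C t * X 1 from rfl]
      rw [sub_mul, coeff_sub]
      have e1 : mn (S.card + 1) 0 = Finsupp.single 0 1 + mn S.card 0 := by
        ext i; fin_cases i <;> simp [Finsupp.single_apply] <;> omega
      rw [e1, coeff_X_mul, ih hnone]
      rw [mul_assoc, coeff_C_mul, coeff_X_mul']
      have e2 : (1 : Fin 2) ∉ (Finsupp.single (0 : Fin 2) 1 + mn S.card 0).support := by
        rw [Finsupp.notMem_support_iff, ← e1]
        simp
      rw [if_neg e2]
      ring

lemma coeff_prod_dual_top_zero (S : Finset (Option ℂ)) (h : none ∈ S) :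
    coeff (mn S.card 0) (∏ o ∈ S, dual o) = 0 := by
  classical
  rw [← Finset.mul_prod_erase S dual h]
  rw [show dual none = X 1 from rfl]
  rw [coeff_X_mul']
  rw [if_neg (by rw [Finsupp.notMem_support_iff]; simp)]

lemma coeff_prod_dual_second (S : Finset (Option ℂ)) (h : none ∈ S) :
    coeff (mn (S.card - 1) 1) (∏ o ∈ S, dual o) = 1 := by
  classical
  rw [← Finset.mul_prod_erase S dual h]
  rw [show dual none = X 1 from rfl]
  have e1 : mn (S.card - 1) 1 = Finsupp.single 1 1 + mn (S.card - 1) 0 := by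
    ext i; fin_cases i <;> simp [Finsupp.single_apply] <;> omega
  rw [e1, coeff_X_mul]
  have := coeff_prod_dual_top (S.erase none) (Finset.notMem_erase _ _)
  rw [Finset.card_erase_of_mem h] at this
  exact this

end Aux3
noncomputable section Aux4

open MvPolynomial

/-- the reduced binary form `u·x^{d-1}y + v·x^{d-2}y²` -/
def P0 (d : ℕ) (u v : ℂ) : R2 :=
  u • monomial (mn (d-1) 1) 1 + v • monomial (mn (d-2) 2) 1

lemma apolar_coeff (F : R2) (μ τ : Fin 2 →₀ ℕ) :
    coeff τ (apolar F (monomial μ 1)) =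
      ∑ m ∈ F.support, (if μ - m = τ
        then (((μ 0).descFactorial (m 0) * (μ 1).descFactorial (m 1) : ℕ) : ℂ) * coeff m F
        else 0) := by
  rw [apolar_eq_sum_support, coeff_sum]
  apply Finset.sum_congr rfl
  intro m _
  rw [apolar_monomial_monomial, coeff_monomial]
  split
  · rw [mul_one]
  · rfl

lemma descFactorial_cast_ne_zero {n k : ℕ} (h : k ≤ n) : ((n.descFactorial k : ℕ) : ℂ) ≠ 0 := by
  rw [Nat.cast_ne_zero]
  intro hc
  rw [Nat.descFactorial_eq_zero_iff_lt] at hc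
  omega

lemma LB {d e : ℕ} (hd : 3 ≤ d) (he1 : 1 ≤ e) (he : e ≤ d - 2) {u v : ℂ} (hv : v ≠ 0)
    {F : R2} (hF : F.IsHomogeneous e)
    (h0 : apolar F (P0 d u v) = 0) :
    coeff (mn e 0) F = 0 ∧ coeff (mn (e-1) 1) F = 0 := by
  classical
  set A := apolar F (monomial (mn (d-1) 1) 1) with hA
  set B := apolar F (monomial (mn (d-2) 2) 1) with hB
  have h0' : ∀ τ, u * coeff τ A + v * coeff τ B = 0 := by
    intro τ
    have : apolar F (P0 d u v) = u • A + v • B := by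
      rw [hA, hB, P0, apolar]
      rw [map_add, map_smul, map_smul]
      rfl
    rw [this] at h0
    have := congrArg (coeff τ) h0
    rwa [coeff_add, coeff_smul, coeff_smul, coeff_zero, smul_eq_mul, smul_eq_mul] at this
  have hsupp : ∀ m ∈ F.support, m 0 + m 1 = e := fun m hm =>
    degree_eq_of_isHomogeneous hF hm
  -- step a
  have hfe : coeff (mn e 0) F = 0 := by
    have hAz : coeff (mn (d-2-e) 2) A = 0 := by
      rw [hA, apolar_coeff]
      apply Finset.sum_eq_zero
      intro m _
      rw [if_neg]
      intro hc
      have := congrArg (fun f => f 1) hc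
      simp only [Finsupp.tsub_apply, mn_apply_one] at this
      omega
    have hBz : coeff (mn (d-2-e) 2) B
        = (((d-2).descFactorial e : ℕ) : ℂ) * coeff (mn e 0) F := by
      rw [hB, apolar_coeff]
      rw [Finset.sum_eq_single (mn e 0)]
      · rw [if_pos (by ext i; fin_cases i <;> simp [Finsupp.tsub_apply])]
        simp
      · intro m hm hne
        rw [if_neg]
        intro hc
        have h1 := congrArg (fun f => f 1) hc
        have h00 := congrArg (fun f => f 0) hc
        simp only [Finsupp.tsub_apply, mn_apply_one, mn_apply_zero] at h1 h00
        have hs := hsupp m hm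
        apply hne
        rw [fin2_finsupp_eq m]
        have hm1 : m 1 = 0 := by omega
        have hm0 : m 0 = e := by omega
        rw [hm1, hm0]
      · intro hns
        rw [if_pos (by ext i; fin_cases i <;> simp [Finsupp.tsub_apply])]
        rw [MvPolynomial.notMem_support_iff.mp hns, mul_zero]
    have := h0' (mn (d-2-e) 2)
    rw [hAz, hBz, mul_zero, zero_add] at this
    rcases mul_eq_zero.mp this with h | h
    · exact absurd h hv
    rcases mul_eq_zero.mp h with h | h
    · exact absurd h (descFactorial_cast_ne_zero (by omega))
    · exact h
  refine ⟨hfe, ?_⟩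
  -- step b
  have hAz : coeff (mn (d-1-e) 1) A = 0 := by
    rw [hA, apolar_coeff]
    apply Finset.sum_eq_zero
    intro m hm
    by_cases hc : mn (d-1) 1 - m = mn (d-1-e) 1
    · rw [if_pos hc]
      have h1 := congrArg (fun f => f 1) hc
      have h00 := congrArg (fun f => f 0) hc
      simp only [Finsupp.tsub_apply, mn_apply_one, mn_apply_zero] at h1 h00
      have hs := hsupp m hm
      have hm1 : m 1 = 0 := by omega
      have hm0 : m 0 = e := by omega
      have : m = mn e 0 := by rw [fin2_finsupp_eq m, hm1, hm0]
      rw [this, hfe, mul_zero]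
    · rw [if_neg hc]
  have hBz : coeff (mn (d-1-e) 1) B
      = (((d-2).descFactorial (e-1) * 2 : ℕ) : ℂ) * coeff (mn (e-1) 1) F := by
    rw [hB, apolar_coeff]
    rw [Finset.sum_eq_single (mn (e-1) 1)]
    · rw [if_pos (by ext i; fin_cases i <;> simp [Finsupp.tsub_apply] <;> omega)]
      norm_num
    · intro m hm hne
      rw [if_neg]
      intro hc
      have h1 := congrArg (fun f => f 1) hc
      have h00 := congrArg (fun f => f 0) hc
      simp only [Finsupp.tsub_apply, mn_apply_one, mn_apply_zero] at h1 h00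
      have hs := hsupp m hm
      apply hne
      rw [fin2_finsupp_eq m]
      have hm1 : m 1 = 1 := by omega
      have hm0 : m 0 = e - 1 := by omega
      rw [hm1, hm0]
    · intro hns
      rw [if_pos (by ext i; fin_cases i <;> simp [Finsupp.tsub_apply] <;> omega)]
      rw [MvPolynomial.notMem_support_iff.mp hns, mul_zero]
  have := h0' (mn (d-1-e) 1)
  rw [hAz, hBz, mul_zero, zero_add] at this
  rcases mul_eq_zero.mp this with h | h
  · exact absurd h hv
  rcases mul_eq_zero.mp h with h | h
  · exfalso
    revert h
    push_cast
    intro h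
    rcases mul_eq_zero.mp h with h | h
    · exact absurd h (descFactorial_cast_ne_zero (by omega))
    · norm_num at h
  · exact h

end Aux4
noncomputable section Aux5

open MvPolynomial

lemma eq_lin_of_isHomogeneous_one {P : R2} (h : P.IsHomogeneous 1) :
    P = C (coeff (Finsupp.single 0 1) P) * X 0 + C (coeff (Finsupp.single 1 1) P) * X 1 := by
  have hne : Finsupp.single (1 : Fin 2) 1 ≠ Finsupp.single (0 : Fin 2) 1 := by
    intro hc
    have := congrArg (fun f => f (0 : Fin 2)) hc
    simp [Finsupp.single_apply] at this
  ext m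
  rw [coeff_add, coeff_C_mul, coeff_C_mul, coeff_X', coeff_X']
  by_cases h0 : Finsupp.single (0 : Fin 2) 1 = m
  · rw [if_pos h0, if_neg (h0 ▸ hne), ← h0]
    ring
  · by_cases h1 : Finsupp.single (1 : Fin 2) 1 = m
    · rw [if_pos h1, if_neg h0, ← h1]
      ring
    · rw [if_neg h0, if_neg h1, mul_zero, mul_zero, add_zero]
      by_contra hc
      have hs := degree_eq_of_isHomogeneous h (MvPolynomial.mem_support_iff.mpr hc)
      have hm := fin2_finsupp_eq m
      rcases (by omega : (m 0 = 1 ∧ m 1 = 0) ∨ (m 0 = 0 ∧ m 1 = 1)) with ⟨ha, hb⟩ | ⟨ha, hb⟩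
      · exact h0 (by rw [hm, ha, hb, mn_single0])
      · exact h1 (by rw [hm, ha, hb]; simp [mn])

lemma exists_lin {P : R2} (h : P.IsHomogeneous 1) :
    ∃ a b : ℂ, P = C a * X 0 + C b * X 1 :=
  ⟨_, _, eq_lin_of_isHomogeneous_one h⟩

lemma P0_ne_zero {d : ℕ} (hd : 3 ≤ d) {u v : ℂ} (hu : u ≠ 0) : P0 d u v ≠ 0 := by
  intro hc
  have := congrArg (coeff (mn (d-1) 1)) hc
  rw [P0, coeff_add, coeff_smul, coeff_smul, coeff_zero, coeff_monomial, coeff_monomial] at this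
  rw [if_pos rfl, if_neg (by
    intro hcc
    have := congrArg (fun f => f (0 : Fin 2)) hcc
    simp at this
    omega)] at this
  simp at this
  exact hu this

lemma lower_reduced (d : ℕ) (hd : 3 ≤ d) {u v : ℂ} (hu : u ≠ 0) (hv : v ≠ 0)
    (r : ℕ) (hr : r ≤ d - 2) (lam : Fin r → R2) (hlam : ∀ i, (lam i).IsHomogeneous 1)
    (hP : P0 d u v = ∑ i, lam i ^ d) : False := by
  classical
  have hex : ∀ i, ∃ a b : ℂ, lam i = C a * X 0 + C b * X 1 := fun i => exists_lin (hlam i)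
  choose A B hAB using hex
  set dir : Fin r → Option ℂ := fun i => if B i = 0 then none else some (A i / B i) with hdir
  set c : Fin r → ℂ := fun i => if B i = 0 then (A i)^d else (B i)^d with hc
  have hlamd : ∀ i, lam i ^ d = c i • dpow d (dir i) := by
    intro i
    by_cases hB : B i = 0
    · have : lam i = C (A i) * X 0 := by rw [hAB i, hB]; simp
      rw [this, hc, hdir]
      simp only [if_pos hB]
      rw [mul_pow, ← map_pow]
      rw [show dpow d none = X 0 ^ d from rfl, MvPolynomial.smul_eq_C_mul]
    · have : lam i = C (B i) * (C (A i / B i) * X 0 + X 1) := by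
        rw [hAB i, mul_add, ← mul_assoc, ← map_mul]
        rw [mul_div_cancel₀ _ hB]
      rw [this, hc, hdir]
      simp only [if_neg hB]
      rw [mul_pow, ← map_pow]
      rw [show dpow d (some (A i / B i)) = (C (A i / B i) * X 0 + X 1) ^ d from rfl,
        MvPolynomial.smul_eq_C_mul]
  set T : Finset (Option ℂ) := Finset.image dir Finset.univ with hT
  have hgroup : P0 d u v
      = ∑ o ∈ T, (∑ i ∈ Finset.univ.filter (fun i => dir i = o), c i) • dpow d o := by
    rw [hP]
    rw [show (∑ i, lam i ^ d) = ∑ i, c i • dpow d (dir i) from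
      Finset.sum_congr rfl (fun i _ => hlamd i)]
    rw [← Finset.sum_fiberwise_of_maps_to
      (fun i _ => Finset.mem_image_of_mem dir (Finset.mem_univ i)) (fun i => c i • dpow d (dir i))]
    apply Finset.sum_congr rfl
    intro o _
    rw [Finset.sum_smul]
    apply Finset.sum_congr rfl
    intro i hi
    rw [(Finset.mem_filter.mp hi).2]
  have hFkill : apolar (∏ o ∈ T, dual o) (P0 d u v) = 0 := by
    rw [hgroup, apolar, map_sum]
    apply Finset.sum_eq_zero
    intro o ho
    rw [map_smul]
    have : diffOp (∏ o ∈ T, dual o) (dpow d o) = 0 :=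
      apolar_prod_eq_zero ho (apolar_dual_dpow d o)
    rw [this, smul_zero]
  rcases Finset.eq_empty_or_nonempty T with hTe | hTne
  · rw [hTe, Finset.sum_empty] at hgroup
    exact P0_ne_zero hd hu hgroup
  have he1 : 1 ≤ T.card := Finset.card_pos.mpr hTne
  have he : T.card ≤ d - 2 := by
    have h1 : T.card ≤ (Finset.univ : Finset (Fin r)).card := Finset.card_image_le
    rw [Finset.card_univ, Fintype.card_fin] at h1
    omega
  have hFhom : (∏ o ∈ T, dual o).IsHomogeneous T.card := by
    have := MvPolynomial.IsHomogeneous.prod T dual (fun _ => 1)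
      (fun o _ => dual_isHomogeneous o)
    rwa [Finset.sum_const, smul_eq_mul, mul_one] at this
  obtain ⟨hc1, hc2⟩ := LB hd he1 he hv hFhom hFkill
  by_cases hnone : none ∈ T
  · rw [coeff_prod_dual_second T hnone] at hc2
    exact one_ne_zero hc2
  · rw [coeff_prod_dual_top T hnone] at hc1
    exact one_ne_zero hc1

end Aux5
noncomputable section Aux6

lemma expand_cast_sub1 {n : ℕ} (hn : 1 ≤ n) : ((n - 1 : ℕ) : ℂ) = (n : ℂ) - 1 := by
  push_cast [Nat.cast_sub hn]
  ring

lemma exRoots (n : ℕ) (hn : 2 ≤ n) (σ : ℂ) (hσ : σ ≠ 0) :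
    ∃ (g : Polynomial ℂ) (t : Fin n → ℂ), Function.Injective t ∧
      g.natDegree = n ∧ g.coeff n = 1 ∧ g.coeff (n-1) = -σ ∧ g.coeff (n-2) = σ^2 ∧
      ∀ i, g.IsRoot (t i) := by
  classical
  by_cases hn3 : 3 ≤ n
  · -- squarefree perturbation trick
    set p : Polynomial ℂ := Polynomial.X^n - Polynomial.C σ * Polynomial.X^(n-1)
      + Polynomial.C (σ^2) * Polynomial.X^(n-2) with hp
    have hpn : p.coeff n = 1 := by
      rw [hp]
      simp only [Polynomial.coeff_add, Polynomial.coeff_sub, Polynomial.coeff_X_pow,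
        Polynomial.coeff_C_mul]
      split_ifs <;> first | (exfalso; omega) | norm_num
    have hpn1 : p.coeff (n-1) = -σ := by
      rw [hp]
      simp only [Polynomial.coeff_add, Polynomial.coeff_sub, Polynomial.coeff_X_pow,
        Polynomial.coeff_C_mul]
      split_ifs <;> first | (exfalso; omega) | norm_num
    have hpn2 : p.coeff (n-2) = σ^2 := by
      rw [hp]
      simp only [Polynomial.coeff_add, Polynomial.coeff_sub, Polynomial.coeff_X_pow,
        Polynomial.coeff_C_mul]
      split_ifs <;> first | (exfalso; omega) | norm_num
    set q := Polynomial.derivative p with hq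
    have hqc : q.coeff (n-1) = n := by
      rw [hq, Polynomial.coeff_derivative]
      rw [show n - 1 + 1 = n by omega, hpn]
      rw [expand_cast_sub1 (by omega)]
      ring
    have hqne : q ≠ 0 := fun hc => by
      rw [hc, Polynomial.coeff_zero] at hqc
      have : (n:ℂ) ≠ 0 := by
        simp only [ne_eq, Nat.cast_eq_zero]
        omega
      exact this hqc.symm
    obtain ⟨a, ha⟩ := Infinite.exists_notMem_finset
      ((q.roots.toFinset).image (fun z => -Polynomial.eval z p))
    set g := p + Polynomial.C a with hg
    have hgn : g.coeff n = 1 := by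
      rw [hg, Polynomial.coeff_add, Polynomial.coeff_C, if_neg (by omega), hpn, add_zero]
    have hgn1 : g.coeff (n-1) = -σ := by
      rw [hg, Polynomial.coeff_add, Polynomial.coeff_C, if_neg (by omega), hpn1, add_zero]
    have hgn2 : g.coeff (n-2) = σ^2 := by
      rw [hg, Polynomial.coeff_add, Polynomial.coeff_C, if_neg (by omega), hpn2, add_zero]
    have hgne : g ≠ 0 := fun hc => by
      rw [hc, Polynomial.coeff_zero] at hgn
      exact one_ne_zero hgn.symm
    have hgq : Polynomial.derivative g = q := by
      rw [hg, Polynomial.derivative_add, Polynomial.derivative_C, add_zero]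
    have hdeg : g.natDegree = n := by
      apply le_antisymm
      · rw [hg, hp]
        apply le_trans (Polynomial.natDegree_add_le _ _)
        simp only [Polynomial.natDegree_C, max_le_iff]
        constructor
        · apply le_trans (Polynomial.natDegree_add_le _ _)
          simp only [max_le_iff]
          constructor
          · apply le_trans (Polynomial.natDegree_sub_le _ _)
            simp only [max_le_iff]
            constructor
            · rw [Polynomial.natDegree_X_pow]
            · apply le_trans (Polynomial.natDegree_C_mul_le _ _)
              rw [Polynomial.natDegree_X_pow]
              omega
          · apply le_trans (Polynomial.natDegree_C_mul_le _ _)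
            rw [Polynomial.natDegree_X_pow]
            omega
        · omega
      · exact Polynomial.le_natDegree_of_ne_zero (by rw [hgn]; exact one_ne_zero)
    have hnocommon : ∀ z : ℂ, g.IsRoot z → ¬ q.IsRoot z := by
      intro z hgz hqz
      apply ha
      rw [Finset.mem_image]
      refine ⟨z, ?_, ?_⟩
      · rw [Multiset.mem_toFinset, Polynomial.mem_roots hqne]
        exact hqz
      · rw [Polynomial.IsRoot, hg, Polynomial.eval_add, Polynomial.eval_C] at hgz
        linear_combination -hgz
    have hcop : IsCoprime g q := by
      apply EuclideanDomain.isCoprime_of_dvd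
      · intro ⟨hc, _⟩
        exact hgne hc
      · intro z hzu hz0 hzg hzq
        have hdegz : z.degree ≠ 0 := by
          have := Polynomial.degree_pos_of_ne_zero_of_nonunit hz0 hzu
          exact this.ne'
        obtain ⟨w, hw⟩ := Complex.isAlgClosed.exists_root z hdegz
        have hgw : g.IsRoot w := by
          obtain ⟨k, hk⟩ := hzg
          rw [Polynomial.IsRoot, hk, Polynomial.eval_mul, hw, zero_mul]
        have hqw : q.IsRoot w := by
          obtain ⟨k, hk⟩ := hzq
          rw [Polynomial.IsRoot, hk, Polynomial.eval_mul, hw, zero_mul]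
        exact hnocommon w hgw hqw
    have hsep : g.Separable := by
      rw [Polynomial.separable_def, hgq]
      exact hcop
    have hnodup : g.roots.Nodup := Polynomial.nodup_roots hsep
    have hcard : Multiset.card g.roots = n := by
      rw [← hdeg]
      exact (Polynomial.splits_iff_card_roots).mp (IsAlgClosed.splits g)
    have hscard : g.roots.toFinset.card = n := by
      rw [Multiset.toFinset_card_of_nodup hnodup, hcard]
    set e := Finset.equivFinOfCardEq hscard with he
    refine ⟨g, fun i => (e.symm i : ℂ), ?_, hdeg, hgn, hgn1, hgn2, ?_⟩
    · intro i j hij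
      exact e.symm.injective (Subtype.coe_injective hij)
    · intro i
      have := (e.symm i).2
      rw [Multiset.mem_toFinset, Polynomial.mem_roots hgne] at this
      exact this
  · -- n = 2
    have hn2 : n = 2 := by omega
    subst hn2
    set s : ℂ := Complex.I * (Real.sqrt 3 : ℝ) with hs
    have hs2 : s^2 = -3 := by
      rw [hs, mul_pow, Complex.I_sq, ← Complex.ofReal_pow,
        Real.sq_sqrt (by norm_num : (3:ℝ) ≥ 0)]
      norm_num
    have hsne : s ≠ 0 := by
      intro hc
      rw [hc] at hs2
      norm_num at hs2
    set t0 : ℂ := σ * (1 + s) / 2 with ht0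
    set t1 : ℂ := σ * (1 - s) / 2 with ht1
    have htne : t0 ≠ t1 := by
      intro hc
      rw [ht0, ht1] at hc
      have h2 : σ * s = 0 := by linear_combination hc
      rcases mul_eq_zero.mp h2 with h | h
      · exact absurd h hσ
      · exact absurd h hsne
    set g : Polynomial ℂ := Polynomial.X^2 - Polynomial.C σ * Polynomial.X
      + Polynomial.C (σ^2) with hg
    have hroot : ∀ z : ℂ, z = t0 ∨ z = t1 → g.IsRoot z := by
      intro z hz
      rw [Polynomial.IsRoot, hg]
      simp only [Polynomial.eval_add, Polynomial.eval_sub, Polynomial.eval_pow,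
        Polynomial.eval_mul, Polynomial.eval_X, Polynomial.eval_C]
      rcases hz with rfl | rfl
      · rw [ht0]
        linear_combination (σ^2 / 4) * hs2
      · rw [ht1]
        linear_combination (σ^2 / 4) * hs2
    have hgn : g.coeff 2 = 1 := by
      rw [hg]
      simp only [Polynomial.coeff_add, Polynomial.coeff_sub, Polynomial.coeff_X_pow,
        Polynomial.coeff_C_mul, Polynomial.coeff_X, Polynomial.coeff_C]
      norm_num
    have hgn1 : g.coeff 1 = -σ := by
      rw [hg]
      simp only [Polynomial.coeff_add, Polynomial.coeff_sub, Polynomial.coeff_X_pow,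
        Polynomial.coeff_C_mul, Polynomial.coeff_X, Polynomial.coeff_C]
      norm_num
    have hgn0 : g.coeff 0 = σ^2 := by
      rw [hg]
      simp only [Polynomial.coeff_add, Polynomial.coeff_sub, Polynomial.coeff_X_pow,
        Polynomial.coeff_C_mul, Polynomial.coeff_X, Polynomial.coeff_C]
      norm_num
    have hdeg : g.natDegree = 2 := by
      apply le_antisymm
      · rw [hg]
        apply le_trans (Polynomial.natDegree_add_le _ _)
        simp only [Polynomial.natDegree_C, max_le_iff]
        refine ⟨le_trans (Polynomial.natDegree_sub_le _ _) ?_, by omega⟩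
        simp only [max_le_iff]
        refine ⟨by rw [Polynomial.natDegree_X_pow],
          le_trans (Polynomial.natDegree_C_mul_le _ _) (by simp [Polynomial.natDegree_X])⟩
      · exact Polynomial.le_natDegree_of_ne_zero (by rw [hgn]; exact one_ne_zero)
    set t : Fin 2 → ℂ := fun i => if i = 0 then t0 else t1 with ht
    have ht0' : t 0 = t0 := by rw [ht]; simp
    have ht1' : t 1 = t1 := by rw [ht]; simp
    refine ⟨g, t, ?_, hdeg, hgn, hgn1, hgn0, ?_⟩
    · intro i j hij
      by_cases hi : i = 0 <;> by_cases hj : j = 0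
      · rw [hi, hj]
      · rw [hi, Fin.eq_one_of_ne_zero j hj, ht0', ht1'] at hij
        exact absurd hij htne
      · rw [hj, Fin.eq_one_of_ne_zero i hi, ht0', ht1'] at hij
        exact absurd hij.symm htne
      · rw [Fin.eq_one_of_ne_zero i hi, Fin.eq_one_of_ne_zero j hj]
    · intro i
      by_cases hi : i = 0
      · rw [hi, ht0']
        exact hroot t0 (Or.inl rfl)
      · rw [Fin.eq_one_of_ne_zero i hi, ht1']
        exact hroot t1 (Or.inr rfl)

end Aux6
noncomputable section Aux7

open MvPolynomial

lemma X0X1pow (a b : ℕ) : (X 0 : R2)^a * (X 1 : R2)^b = monomial (mn a b) 1 := by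
  rw [X_pow_eq_monomial, X_pow_eq_monomial, monomial_mul, one_mul]
  rfl

lemma sum_swap_rec {N n : ℕ} (cvec t : Fin N → ℂ) (co : ℕ → ℂ) (E : ℕ → ℕ) (m : ℕ)
    (h : ∀ i, t i ^ m = -∑ j ∈ Finset.range n, co j * t i ^ (E j)) :
    ∑ i, cvec i * t i ^ m = -∑ j ∈ Finset.range n, co j * (∑ i, cvec i * t i ^ (E j)) := by
  calc ∑ i, cvec i * t i ^ m
      = ∑ i, ∑ j ∈ Finset.range n, -(co j * (cvec i * t i ^ (E j))) := by
        apply Finset.sum_congr rfl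
        intro i _
        rw [h i, mul_neg, Finset.mul_sum, ← Finset.sum_neg_distrib]
        apply Finset.sum_congr rfl
        intro j _
        ring
    _ = ∑ j ∈ Finset.range n, ∑ i, -(co j * (cvec i * t i ^ (E j))) := Finset.sum_comm
    _ = -∑ j ∈ Finset.range n, co j * (∑ i, cvec i * t i ^ (E j)) := by
        rw [← Finset.sum_neg_distrib]
        apply Finset.sum_congr rfl
        intro j _
        rw [Finset.mul_sum, ← Finset.sum_neg_distrib]

lemma upper_reduced (d : ℕ) (hd : 3 ≤ d) {u v : ℂ} (hu : u ≠ 0) (hv : v ≠ 0) :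
    ∃ lam : Fin (d-1) → R2, (∀ i, (lam i).IsHomogeneous 1) ∧ P0 d u v = ∑ i, lam i ^ d := by
  classical
  set n := d - 1 with hn
  have hn2 : 2 ≤ n := by omega
  have hdC : (d : ℂ) ≠ 0 := by
    simp only [ne_eq, Nat.cast_eq_zero]
    omega
  have hdC1 : (d : ℂ) - 1 ≠ 0 := by
    intro hc
    have : (d : ℂ) = ((1 : ℕ) : ℂ) := by push_cast; linear_combination hc
    have := Nat.cast_inj (R := ℂ).mp this
    omega
  set σ : ℂ := u * ((d : ℂ) - 1) / (2 * v) with hσdef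
  have hσ : σ ≠ 0 := by
    apply div_ne_zero (mul_ne_zero hu hdC1)
    exact mul_ne_zero two_ne_zero hv
  obtain ⟨g, t, htinj, hgdeg, hgn, hgn1, hgn2, hgroot⟩ := exRoots n hn2 σ hσ
  -- choose coefficients
  have hch : (d.choose 2 : ℂ) ≠ 0 := by
    have := Nat.choose_pos (show 2 ≤ d by omega)
    simp only [ne_eq, Nat.cast_eq_zero]
    omega
  have hch2 : 2 * (d.choose 2 : ℂ) = (d : ℂ) * ((d : ℂ) - 1) := by
    have heven : Even (d * (d - 1)) := by
      rw [mul_comm]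
      have := Nat.even_mul_succ_self (d - 1)
      rwa [show d - 1 + 1 = d by omega] at this
    have hnat : d.choose 2 * 2 = d * (d - 1) := by
      rw [Nat.choose_two_right]
      exact Nat.div_mul_cancel heven.two_dvd
    have := congrArg (fun m : ℕ => (m : ℂ)) hnat
    push_cast [Nat.cast_sub (show 1 ≤ d by omega)] at this
    linear_combination this
  set M : Matrix (Fin n) (Fin n) ℂ := Matrix.of (fun k i => t i ^ (k : ℕ)) with hM
  have hMdet : IsUnit M.det := by
    rw [isUnit_iff_ne_zero]
    have hMt : M = (Matrix.vandermonde t).transpose := by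
      ext k i
      simp [hM, Matrix.vandermonde]
    rw [hMt, Matrix.det_transpose, Matrix.det_vandermonde]
    rw [Finset.prod_ne_zero_iff]
    intro i _
    rw [Finset.prod_ne_zero_iff]
    intro j hj
    have hij : j ≠ i := (Finset.mem_Ioi.mp hj).ne'
    exact sub_ne_zero.mpr (fun hc => hij (htinj hc))
  set mhat : Fin n → ℂ := fun k => if (k : ℕ) = n - 1 then v / (d.choose 2 : ℂ) else 0
    with hmhat
  set cvec : Fin n → ℂ := M⁻¹.mulVec mhat with hcvec
  have hMc : M.mulVec cvec = mhat := by
    rw [hcvec, Matrix.mulVec_mulVec, Matrix.mul_nonsing_inv _ hMdet, Matrix.one_mulVec]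
  set S : ℕ → ℂ := fun k => ∑ i, cvec i * t i ^ k with hS
  have hSk : ∀ k : Fin n, S (k : ℕ) = mhat k := by
    intro k
    have h2 := congrFun hMc k
    simp only [Matrix.mulVec, dotProduct] at h2
    rw [hS]
    rw [← h2]
    apply Finset.sum_congr rfl
    intro i _
    simp [hM, mul_comm]
  have hS0 : ∀ k : ℕ, k < n → k ≠ n - 1 → S k = 0 := by
    intro k hk hne
    have h := hSk ⟨k, hk⟩
    have h2 : S k = if k = n - 1 then v / (d.choose 2 : ℂ) else 0 := h
    rwa [if_neg hne] at h2
  have hS1 : S (n - 1) = v / (d.choose 2 : ℂ) := by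
    have h := hSk ⟨n - 1, by omega⟩
    have h2 : S (n - 1) = if n - 1 = n - 1 then v / (d.choose 2 : ℂ) else 0 := h
    rwa [if_pos rfl] at h2
  have hRec : ∀ i, t i ^ n = -∑ j ∈ Finset.range n, g.coeff j * t i ^ j := by
    intro i
    have he := hgroot i
    rw [Polynomial.IsRoot, Polynomial.eval_eq_sum_range, hgdeg] at he
    rw [Finset.sum_range_succ, hgn, one_mul] at he
    linear_combination he
  have hSn : S n = σ * (v / (d.choose 2 : ℂ)) := by
    show (∑ i, cvec i * t i ^ n) = _
    rw [sum_swap_rec cvec t (fun j => g.coeff j) id n hRec]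
    show -∑ j ∈ Finset.range n, g.coeff j * S j = _
    rw [Finset.sum_eq_single_of_mem (n - 1) (Finset.mem_range.mpr (by omega))]
    · show -(g.coeff (n-1) * S (n-1)) = _
      rw [hgn1, hS1]
      ring
    · intro j hj hne
      show g.coeff j * S j = 0
      rw [hS0 j (Finset.mem_range.mp hj) hne, mul_zero]
  have hkey : σ * (v / (d.choose 2 : ℂ)) = u / (d : ℂ) := by
    rw [hσdef]
    field_simp
    linear_combination (-1 : ℂ) * hch2
  have hSn' : S n = u / (d : ℂ) := hSn.trans hkey
  have hRec2 : ∀ i, t i ^ (n + 1) = -∑ j ∈ Finset.range n, g.coeff j * t i ^ (j + 1) := by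
    intro i
    rw [pow_succ, hRec i, neg_mul, Finset.sum_mul]
    congr 1
    apply Finset.sum_congr rfl
    intro j _
    rw [pow_succ]
    ring
  have hSd : S (n + 1) = 0 := by
    show (∑ i, cvec i * t i ^ (n+1)) = 0
    rw [sum_swap_rec cvec t (fun j => g.coeff j) (fun j => j + 1) (n + 1) hRec2]
    show -∑ j ∈ Finset.range n, g.coeff j * S (j + 1) = 0
    have hterm : ∀ j ∈ Finset.range n, g.coeff j * S (j + 1)
        = (if j = n - 2 then σ^2 * (v / (d.choose 2 : ℂ)) else 0)
          + (if j = n - 1 then -σ * (u / (d : ℂ)) else 0) := by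
      intro j hj
      have hjn := Finset.mem_range.mp hj
      by_cases h2 : j = n - 2
      · rw [if_pos h2, if_neg (by omega)]
        rw [h2, show n - 2 + 1 = n - 1 by omega, hgn2, hS1, add_zero]
      · by_cases h1 : j = n - 1
        · rw [if_neg h2, if_pos h1, zero_add]
          rw [h1, show n - 1 + 1 = n by omega, hgn1, hSn']
        · rw [if_neg h2, if_neg h1, add_zero]
          rw [hS0 (j + 1) (by omega) (by omega), mul_zero]
    rw [Finset.sum_congr rfl hterm, Finset.sum_add_distrib]
    rw [Finset.sum_ite_eq' (Finset.range n) (n - 2), Finset.sum_ite_eq' (Finset.range n) (n - 1)]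
    rw [if_pos (Finset.mem_range.mpr (by omega)), if_pos (Finset.mem_range.mpr (by omega))]
    rw [← hkey]
    ring
  -- build the linear forms
  have hpow : ∀ i : Fin n, ∃ δ : ℂ, δ ^ d = cvec i := fun i =>
    IsAlgClosed.exists_pow_nat_eq (cvec i) (by omega)
  choose δ hδ using hpow
  refine ⟨fun i => C (δ i) * (C (t i) * X 0 + X 1), ?_, ?_⟩
  · intro i
    exact ((isHomogeneous_C_mul_X (t i) 0).add (isHomogeneous_X ℂ 1)).C_mul _
  · -- the decomposition identity
    have hstep1 : ∀ i : Fin n, (C (δ i) * (C (t i) * X 0 + X 1) : R2) ^ d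
        = ∑ k ∈ Finset.range (d + 1),
            C (cvec i * t i ^ k * (d.choose k : ℂ)) * ((X 0 : R2)^k * (X 1 : R2)^(d - k)) := by
      intro i
      rw [mul_pow, ← map_pow, hδ, add_pow, Finset.mul_sum]
      apply Finset.sum_congr rfl
      intro k _
      rw [mul_pow, ← map_pow]
      rw [show ((d.choose k : ℕ) : R2) = C ((d.choose k : ℕ) : ℂ) from by
        rw [map_natCast (C : ℂ →+* R2)]]
      rw [map_mul, map_mul]
      ring
    rw [Finset.sum_congr rfl (fun i _ => hstep1 i)]
    rw [Finset.sum_comm]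
    have hstep2 : ∀ k ∈ Finset.range (d + 1),
        (∑ i : Fin n, C (cvec i * t i ^ k * (d.choose k : ℂ))
            * ((X 0 : R2)^k * (X 1 : R2)^(d - k)))
        = C (S k * (d.choose k : ℂ)) * ((X 0 : R2)^k * (X 1 : R2)^(d - k)) := by
      intro k _
      rw [← Finset.sum_mul]
      congr 1
      rw [← map_sum]
      congr 1
      rw [hS, Finset.sum_mul]
    rw [Finset.sum_congr rfl hstep2]
    have hstep3 : ∀ k ∈ Finset.range (d + 1),
        C (S k * (d.choose k : ℂ)) * ((X 0 : R2)^k * (X 1 : R2)^(d - k))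
        = (if k = d - 1 then u • monomial (mn (d-1) 1) 1 else 0)
          + (if k = d - 2 then v • monomial (mn (d-2) 2) 1 else 0) := by
      intro k hk
      have hkd := Finset.mem_range.mp hk
      by_cases h1 : k = d - 1
      · rw [if_pos h1, if_neg (by omega), add_zero, h1]
        rw [show S (d - 1) = u / (d : ℂ) from hSn']
        rw [show d.choose (d - 1) = d from by
          rw [show d - 1 = d - 1 from rfl, Nat.choose_symm (by omega : 1 ≤ d),
            Nat.choose_one_right]]
        rw [show d - (d - 1) = 1 by omega, X0X1pow, smul_eq_C_mul]
        congr 1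
        field_simp
      · by_cases h2 : k = d - 2
        · rw [if_neg h1, if_pos h2, zero_add, h2]
          rw [show S (d - 2) = v / (d.choose 2 : ℂ) from by
            rw [show d - 2 = n - 1 by omega]; exact hS1]
          rw [show d.choose (d - 2) = d.choose 2 from Nat.choose_symm (by omega : 2 ≤ d)]
          rw [show d - (d - 2) = 2 by omega, X0X1pow, smul_eq_C_mul]
          congr 1
          field_simp
        · rw [if_neg h1, if_neg h2, add_zero]
          have hSz : S k = 0 := by
            by_cases h3 : k = d
            · rw [h3, show d = n + 1 by omega]
              exact hSd
            · exact hS0 k (by omega) (by omega)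
          rw [hSz, zero_mul, map_zero, zero_mul]
    rw [Finset.sum_congr rfl hstep3, Finset.sum_add_distrib]
    rw [Finset.sum_ite_eq' (Finset.range (d+1)) (d - 1), Finset.sum_ite_eq' (Finset.range (d+1)) (d - 2)]
    rw [if_pos (Finset.mem_range.mpr (by omega)), if_pos (Finset.mem_range.mpr (by omega))]
    rfl

end Aux7
noncomputable section Aux8

open MvPolynomial

lemma waringRank_eq_of_equiv (l : ℕ) (φ ψ : R2 →ₐ[ℂ] R2)
    (hψφ : ∀ Q, ψ (φ Q) = Q)
    (hφh : ∀ Q : R2, Q.IsHomogeneous 1 → (φ Q).IsHomogeneous 1)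
    (hψh : ∀ Q : R2, Q.IsHomogeneous 1 → (ψ Q).IsHomogeneous 1)
    (P : R2) : waringRank l (φ P) = waringRank l P := by
  unfold waringRank
  congr 1
  ext r
  simp only [Set.mem_setOf_eq]
  constructor
  · rintro ⟨lam, hh, hsum⟩
    refine ⟨fun i => ψ (lam i), fun i => hψh _ (hh i), ?_⟩
    have h2 := congrArg ψ hsum
    rw [hψφ, map_sum] at h2
    rw [h2]
    apply Finset.sum_congr rfl
    intro i _
    show ψ (lam i ^ l) = ψ (lam i) ^ l
    exact map_pow ψ (lam i) l
  · rintro ⟨lam, hh, hsum⟩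
    refine ⟨fun i => φ (lam i), fun i => hφh _ (hh i), ?_⟩
    rw [hsum, map_sum]
    apply Finset.sum_congr rfl
    intro i _
    show φ (lam i ^ l) = φ (lam i) ^ l
    exact map_pow φ (lam i) l

lemma aeval_preserves_h1 (f0 f1 : R2) (h0 : f0.IsHomogeneous 1) (h1 : f1.IsHomogeneous 1) :
    ∀ Q : R2, Q.IsHomogeneous 1 → ((aeval ![f0, f1] : R2 →ₐ[ℂ] R2) Q).IsHomogeneous 1 := by
  intro Q hQ
  obtain ⟨a, b, rfl⟩ := exists_lin hQ
  rw [map_add, map_mul, map_mul, aeval_X, aeval_X, aeval_C, aeval_C]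
  simp only [Matrix.cons_val_zero, Matrix.cons_val_one, Matrix.head_cons, algebraMap_eq]
  exact (h0.C_mul a).add (h1.C_mul b)

end Aux8
noncomputable section Final

open MvPolynomial

/-- For `d ≥ 3` and pairwise linearly independent linear forms `λ₁, λ₂, λ₃`, the Waring rank
of `λ₁^{d−2} λ₂ λ₃` equals `d − 1`. -/
theorem waring_rank_special (d : ℕ) (hd : 3 ≤ d)
    (l1 l2 l3 : MvPolynomial (Fin 2) ℂ)
    (h1 : l1.IsHomogeneous 1) (h2 : l2.IsHomogeneous 1) (h3 : l3.IsHomogeneous 1)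
    (h12 : LinearIndependent ℂ ![l1, l2]) (h13 : LinearIndependent ℂ ![l1, l3])
    (h23 : LinearIndependent ℂ ![l2, l3]) :
    waringRank d (l1 ^ (d - 2) * l2 * l3) = d - 1 := by
  classical
  obtain ⟨a1, b1, hl1⟩ := exists_lin h1
  obtain ⟨a2, b2, hl2⟩ := exists_lin h2
  obtain ⟨a3, b3, hl3⟩ := exists_lin h3
  have pair12 := LinearIndependent.pair_iff.mp h12
  have pair13 := LinearIndependent.pair_iff.mp h13
  have pair23 := LinearIndependent.pair_iff.mp h23
  set Δ : ℂ := a1 * b2 - b1 * a2 with hΔdef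
  have hΔ : Δ ≠ 0 := by
    intro hΔ0
    have hCΔ : (C a1 * C b2 - C b1 * C a2 : R2) = 0 := by
      rw [← map_mul, ← map_mul, ← map_sub, ← hΔdef, hΔ0, map_zero]
    have e0 : b2 • l1 + (-b1) • l2 = 0 := by
      rw [hl1, hl2, smul_eq_C_mul, smul_eq_C_mul, map_neg]
      linear_combination (X 0 : R2) * hCΔ
    obtain ⟨hb2, hb1⟩ := pair12 b2 (-b1) e0
    have e1 : (-a2) • l1 + a1 • l2 = 0 := by
      rw [hl1, hl2, smul_eq_C_mul, smul_eq_C_mul, map_neg]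
      linear_combination (X 1 : R2) * hCΔ
    obtain ⟨ha2, ha1⟩ := pair12 (-a2) a1 e1
    have hl10 : l1 = 0 := by
      rw [hl1, ha1, neg_eq_zero.mp hb1]
      simp
    have e2 : (1:ℂ) • l1 + (0:ℂ) • l2 = 0 := by
      rw [hl10]
      simp
    exact one_ne_zero (pair12 1 0 e2).1
  -- the change of variables
  set φ : R2 →ₐ[ℂ] R2 := aeval ![l1, l2] with hφ
  set ψ : R2 →ₐ[ℂ] R2 := aeval ![C (b2/Δ) * X 0 + C (-b1/Δ) * X 1,
    C (-a2/Δ) * X 0 + C (a1/Δ) * X 1] with hψ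
  have hφX0 : φ (X 0) = l1 := by rw [hφ, aeval_X]; simp
  have hφX1 : φ (X 1) = l2 := by rw [hφ, aeval_X]; simp
  have hψX0 : ψ (X 0) = C (b2/Δ) * X 0 + C (-b1/Δ) * X 1 := by rw [hψ, aeval_X]; simp
  have hψX1 : ψ (X 1) = C (-a2/Δ) * X 0 + C (a1/Δ) * X 1 := by rw [hψ, aeval_X]; simp
  have hCeq : ∀ x y : ℂ, x = y → (C x : R2) = C y := fun x y h => by rw [h]
  have k1 : (C a1 * C (b2/Δ) + C b1 * C (-a2/Δ) : R2) = 1 := by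
    rw [← map_mul, ← map_mul, ← map_add, show a1 * (b2/Δ) + b1 * (-a2/Δ) = 1 from by
      field_simp
      first | linear_combination hΔdef | linear_combination -hΔdef, map_one]
  have k2 : (C a1 * C (-b1/Δ) + C b1 * C (a1/Δ) : R2) = 0 := by
    rw [← map_mul, ← map_mul, ← map_add, show a1 * (-b1/Δ) + b1 * (a1/Δ) = 0 from by
      field_simp
      ring, map_zero]
  have k3 : (C a2 * C (b2/Δ) + C b2 * C (-a2/Δ) : R2) = 0 := by
    rw [← map_mul, ← map_mul, ← map_add, show a2 * (b2/Δ) + b2 * (-a2/Δ) = 0 from by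
      field_simp
      ring, map_zero]
  have k4 : (C a2 * C (-b1/Δ) + C b2 * C (a1/Δ) : R2) = 1 := by
    rw [← map_mul, ← map_mul, ← map_add, show a2 * (-b1/Δ) + b2 * (a1/Δ) = 1 from by
      field_simp
      first | linear_combination hΔdef | linear_combination -hΔdef, map_one]
  have hψl1 : ψ l1 = X 0 := by
    rw [hl1, map_add, map_mul, map_mul, aeval_C, aeval_C, hψX0, hψX1]
    simp only [algebraMap_eq]
    linear_combination (X 0 : R2) * k1 + (X 1 : R2) * k2
  have hψl2 : ψ l2 = X 1 := by
    rw [hl2, map_add, map_mul, map_mul, aeval_C, aeval_C, hψX0, hψX1]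
    simp only [algebraMap_eq]
    linear_combination (X 0 : R2) * k3 + (X 1 : R2) * k4
  have hψφ : ∀ Q, ψ (φ Q) = Q := by
    have hcomp : ψ.comp φ = AlgHom.id ℂ R2 := by
      apply MvPolynomial.algHom_ext
      intro i
      fin_cases i
      · show ψ (φ (X 0)) = X 0
        rw [hφX0, hψl1]
      · show ψ (φ (X 1)) = X 1
        rw [hφX1, hψl2]
    intro Q
    exact DFunLike.congr_fun hcomp Q
  have hφh : ∀ Q : R2, Q.IsHomogeneous 1 → (φ Q).IsHomogeneous 1 := by
    rw [hφ]
    exact aeval_preserves_h1 l1 l2 h1 h2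
  have hψh : ∀ Q : R2, Q.IsHomogeneous 1 → (ψ Q).IsHomogeneous 1 := by
    rw [hψ]
    apply aeval_preserves_h1
    · exact (isHomogeneous_C_mul_X _ 0).add (isHomogeneous_C_mul_X _ 1)
    · exact (isHomogeneous_C_mul_X _ 0).add (isHomogeneous_C_mul_X _ 1)
  -- coordinates of l3 in the basis (l1, l2)
  set u' : ℂ := (a3 * b2 - b3 * a2) / Δ with hu'def
  set v' : ℂ := (a1 * b3 - b1 * a3) / Δ with hv'def
  have hl3' : C u' * l1 + C v' * l2 = l3 := by
    rw [hl1, hl2, hl3]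
    have m1 : (C u' * C a1 + C v' * C a2 : R2) = C a3 := by
      rw [← map_mul, ← map_mul, ← map_add]
      apply hCeq
      rw [hu'def, hv'def]
      field_simp
      first | linear_combination a3 * hΔdef | linear_combination -a3 * hΔdef | ring
    have m2 : (C u' * C b1 + C v' * C b2 : R2) = C b3 := by
      rw [← map_mul, ← map_mul, ← map_add]
      apply hCeq
      rw [hu'def, hv'def]
      field_simp
      first | linear_combination b3 * hΔdef | linear_combination -b3 * hΔdef | ring
    linear_combination (X 0 : R2) * m1 + (X 1 : R2) * m2
  have hu' : u' ≠ 0 := by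
    intro h0
    have e : v' • l2 + (-1 : ℂ) • l3 = 0 := by
      rw [smul_eq_C_mul, smul_eq_C_mul, ← hl3', h0, map_zero]
      simp only [map_neg, map_one]
      ring
    have := (pair23 v' (-1) e).2
    norm_num at this
  have hv' : v' ≠ 0 := by
    intro h0
    have e : u' • l1 + (-1 : ℂ) • l3 = 0 := by
      rw [smul_eq_C_mul, smul_eq_C_mul, ← hl3', h0, map_zero]
      simp only [map_neg, map_one]
      ring
    have := (pair13 u' (-1) e).2
    norm_num at this
  -- the reduced form
  set PX : R2 := X 0 ^ (d-2) * X 1 * (C u' * X 0 + C v' * X 1) with hPXdef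
  have hPXphi : l1 ^ (d - 2) * l2 * l3 = φ PX := by
    rw [hPXdef, map_mul, map_mul, map_pow, map_add, map_mul, map_mul, aeval_C, aeval_C]
    rw [show (aeval ![l1, l2]) (X 0) = l1 from hφX0,
      show (aeval ![l1, l2]) (X 1) = l2 from hφX1]
    simp only [algebraMap_eq]
    rw [hl3']
  have hPX0 : PX = P0 d u' v' := by
    rw [hPXdef, P0, smul_eq_C_mul, smul_eq_C_mul, ← X0X1pow (d-1) 1, ← X0X1pow (d-2) 2,
      pow_one]
    rw [show (X 0 : R2)^(d-1) = X 0^(d-2) * X 0 from by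
      rw [← pow_succ, show d-2+1 = d-1 by omega]]
    ring
  rw [hPXphi, waringRank_eq_of_equiv d φ ψ hψφ hφh hψh PX, hPX0]
  -- now compute the rank of the reduced form
  obtain ⟨lam, hlamh, hlamsum⟩ := upper_reduced d hd hu' hv'
  have hmem : (d - 1) ∈ {r | ∃ lam : Fin r → MvPolynomial (Fin 2) ℂ,
      (∀ i, (lam i).IsHomogeneous 1) ∧ P0 d u' v' = ∑ i, lam i ^ d} :=
    ⟨lam, hlamh, hlamsum⟩
  apply le_antisymm
  · exact Nat.sInf_le hmem
  · apply le_csInf ⟨d - 1, hmem⟩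
    intro r hr
    by_contra hlt
    obtain ⟨lam', hh', hsum'⟩ := hr
    exact lower_reduced d hd hu' hv' r (by omega) lam' hh' hsum'

end Final
end

section
/- Let P = a₀X₀⁴ + 4a₁X₀³X₁ + 6a₂X₀²X₁² + 4a₃X₀X₁³ + a₄X₁⁴ be a nonzero binary quartic, and set g₃(P) := a₀a₂a₄ + 2a₁a₂a₃ − a₂³ − a₀a₃² − a₁²a₄. Then: d₁(P) = 1 if and only if P = λ⁴ for some nonzero linear form λ; d₁(P) = 2 if and only if g₃(P) = 0 and P is not the fourth power of a linear form; and d₁(P) = 3 if and only if g₃(P) ≠ 0. -/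
/-!
Common definitions: the apolar action of `ℂ[X₀,X₁]` on itself
(`Q • P := Q(∂/∂X₀, ∂/∂X₁)(P)`), the apolar ideal `Ann(P)` and its homogeneous
components, the cokernel `C_P^d` of `Q ↦ Q • P : ℂ[X₀,X₁]_d → ℂ[X₀,X₁]_{l-d}`,
the invariant `d₁(P)` and the Waring rank.
-/

open MvPolynomial

noncomputable section
namespace D1Aux

lemma diffOp_monomial (m : Fin 2 →₀ ℕ) (c : ℂ) :
    diffOp (monomial m c) = c • (pd 0 ^ (m 0) * pd 1 ^ (m 1)) := by
  have : (monomial m c : MvPolynomial (Fin 2) ℂ) = AddMonoidAlgebra.single m c := rfl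
  rw [diffOp, this]
  erw [AddMonoidAlgebra.lift_single]
  rfl

lemma apolar_C (c : ℂ) (P : MvPolynomial (Fin 2) ℂ) : apolar (C c) P = c • P := by
  simp [apolar, diffOp, AlgHom.commutes, Algebra.algebraMap_eq_smul_one]

lemma apolar_X (i : Fin 2) (P : MvPolynomial (Fin 2) ℂ) : apolar (X i) P = pderiv i P := by
  rw [apolar, show (X i : MvPolynomial (Fin 2) ℂ) = monomial (Finsupp.single i 1) 1 from rfl,
    diffOp_monomial]
  fin_cases i <;> simp [pd]

lemma apolar_mul (Q R P : MvPolynomial (Fin 2) ℂ) :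
    apolar (Q * R) P = apolar Q (apolar R P) := by
  simp [apolar, map_mul, Module.End.mul_apply]

lemma apolar_add (Q R P : MvPolynomial (Fin 2) ℂ) :
    apolar (Q + R) P = apolar Q P + apolar R P := by
  simp [apolar, map_add, LinearMap.add_apply]

lemma apolar_one (P : MvPolynomial (Fin 2) ℂ) : apolar 1 P = P := by
  simp [apolar, map_one, Module.End.one_apply]

lemma pderiv_ofNat (i : Fin 2) (n : ℕ) [n.AtLeastTwo] :
    pderiv (R := ℂ) i (OfNat.ofNat n : MvPolynomial (Fin 2) ℂ) = 0 := by
  rw [show (OfNat.ofNat n : MvPolynomial (Fin 2) ℂ) = C (OfNat.ofNat n) from (map_ofNat _ _).symm,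
    pderiv_C]

lemma pderiv_natCast (i : Fin 2) (n : ℕ) :
    pderiv (R := ℂ) i ((n : MvPolynomial (Fin 2) ℂ)) = 0 := by
  rw [show ((n : MvPolynomial (Fin 2) ℂ)) = C (n : ℂ) by simp, pderiv_C]

def mu (d i : ℕ) : Fin 2 →₀ ℕ := Finsupp.single 0 i + Finsupp.single 1 (d - i)

lemma mu_apply0 (d i : ℕ) : mu d i 0 = i := by simp [mu, Finsupp.single_apply]
lemma mu_apply1 (d i : ℕ) : mu d i 1 = d - i := by simp [mu, Finsupp.single_apply]

lemma degree_two_var (m : Fin 2 →₀ ℕ) : m.degree = m 0 + m 1 := by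
  rw [Finsupp.degree_apply, Finset.sum_subset (Finset.subset_univ m.support)
    (by intro i _ hi; simpa using Finsupp.notMem_support_iff.mp hi), Fin.sum_univ_two]

lemma finsupp_eq_mu (m : Fin 2 →₀ ℕ) (d : ℕ) (h : m 0 + m 1 = d) : m = mu d (m 0) := by
  ext i
  have h2 : (i : Fin 2) = 0 ∨ (i : Fin 2) = 1 := by omega
  rcases h2 with h2 | h2 <;> subst h2
  · simp [mu_apply0]
  · rw [mu_apply1]; omega

lemma monomial_eq' (m : Fin 2 →₀ ℕ) (c : ℂ) :
    (monomial m c : MvPolynomial (Fin 2) ℂ) = C c * X 0 ^ (m 0) * X 1 ^ (m 1) := by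
  rw [monomial_eq, Finsupp.prod_fintype _ _ (fun i => pow_zero _), Fin.prod_univ_two, mul_assoc]

lemma rep (d : ℕ) (Q : MvPolynomial (Fin 2) ℂ) (hQ : Q.IsHomogeneous d) :
    Q = ∑ i ∈ Finset.range (d + 1),
      C (coeff (mu d i) Q) * X 0 ^ i * X 1 ^ (d - i) := by
  have hsub : Q.support ⊆ (Finset.range (d + 1)).image (mu d) := by
    intro v hv
    have hc : coeff v Q ≠ 0 := MvPolynomial.mem_support_iff.mp hv
    have hdeg : v.degree = d := by
      by_contra h; exact hc (hQ.coeff_eq_zero h)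
    rw [degree_two_var] at hdeg
    exact Finset.mem_image.mpr ⟨v 0, Finset.mem_range.mpr (by omega),
      (finsupp_eq_mu v d hdeg).symm⟩
  have hinj : ∀ i ∈ Finset.range (d+1), ∀ j ∈ Finset.range (d+1), mu d i = mu d j → i = j := by
    intro i _ j _ hij
    have := congrArg (fun f => f 0) hij
    simpa [mu_apply0] using this
  conv_lhs => rw [MvPolynomial.as_sum (p := Q)]
  rw [Finset.sum_subset hsub
    (fun v _ hv => by rw [MvPolynomial.notMem_support_iff.mp hv, map_zero]),
    Finset.sum_image hinj]
  exact Finset.sum_congr rfl fun i _ => by rw [monomial_eq', mu_apply0, mu_apply1]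

lemma rep0 (Q : MvPolynomial (Fin 2) ℂ) (hQ : Q.IsHomogeneous 0) : ∃ c, Q = C c := by
  refine ⟨coeff (mu 0 0) Q, ?_⟩
  conv_lhs => rw [rep 0 Q hQ]
  simp [Finset.sum_range_succ]

lemma rep1 (Q : MvPolynomial (Fin 2) ℂ) (hQ : Q.IsHomogeneous 1) :
    ∃ b0 b1, Q = C b0 * X 0 + C b1 * X 1 := by
  refine ⟨coeff (mu 1 1) Q, coeff (mu 1 0) Q, ?_⟩
  conv_lhs => rw [rep 1 Q hQ]
  simp [Finset.sum_range_succ]; ring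

lemma rep2 (Q : MvPolynomial (Fin 2) ℂ) (hQ : Q.IsHomogeneous 2) :
    ∃ b0 b1 b2, Q = C b0 * X 0 ^ 2 + C b1 * (X 0 * X 1) + C b2 * X 1 ^ 2 := by
  refine ⟨coeff (mu 2 2) Q, coeff (mu 2 1) Q, coeff (mu 2 0) Q, ?_⟩
  conv_lhs => rw [rep 2 Q hQ]
  simp [Finset.sum_range_succ]; ring

lemma lin1 (u v : ℂ) (h : C u * X 0 + C v * X 1 = (0 : MvPolynomial (Fin 2) ℂ)) :
    u = 0 ∧ v = 0 := by
  constructor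
  · simpa using congrArg (eval ![1, 0]) h
  · simpa using congrArg (eval ![0, 1]) h

lemma lin2 (u v w : ℂ)
    (h : C u * X 0 ^ 2 + C v * (X 0 * X 1) + C w * X 1 ^ 2 = (0 : MvPolynomial (Fin 2) ℂ)) :
    u = 0 ∧ v = 0 ∧ w = 0 := by
  have h1 := congrArg (eval ![1, 0]) h
  have h2 := congrArg (eval ![0, 1]) h
  have h3 := congrArg (eval ![1, 1]) h
  simp at h1 h2 h3
  refine ⟨h1, ?_, h2⟩
  linear_combination h3 - h1 - h2

lemma lin3 (u v w z : ℂ)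
    (h : C u * X 0 ^ 3 + C v * (X 0 ^ 2 * X 1) + C w * (X 0 * X 1 ^ 2) + C z * X 1 ^ 3
      = (0 : MvPolynomial (Fin 2) ℂ)) :
    u = 0 ∧ v = 0 ∧ w = 0 ∧ z = 0 := by
  have h1 := congrArg (eval ![1, 0]) h
  have h2 := congrArg (eval ![0, 1]) h
  have h3 := congrArg (eval ![1, 1]) h
  have h4 := congrArg (eval ![1, -1]) h
  simp at h1 h2 h3 h4
  refine ⟨h1, ?_, ?_, h2⟩
  · linear_combination (h3 - h4) / 2 - h2
  · linear_combination (h3 + h4) / 2 - h1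

section Action

variable (a0 a1 a2 a3 a4 : ℂ) (P : MvPolynomial (Fin 2) ℂ)
  (hPdef : P = C a0 * X 0 ^ 4 + C (4 * a1) * X 0 ^ 3 * X 1 + C (6 * a2) * X 0 ^ 2 * X 1 ^ 2
      + C (4 * a3) * X 0 * X 1 ^ 3 + C a4 * X 1 ^ 4)

include hPdef

lemma action3 (b0 b1 b2 b3 : ℂ) :
    apolar (C b0 * X 0 ^ 3 + C b1 * (X 0 ^ 2 * X 1) + C b2 * (X 0 * X 1 ^ 2) + C b3 * X 1 ^ 3) P
      = C (24 * (b0 * a0 + b1 * a1 + b2 * a2 + b3 * a3)) * X 0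
        + C (24 * (b0 * a1 + b1 * a2 + b2 * a3 + b3 * a4)) * X 1 := by
  subst hPdef
  simp only [apolar_add, apolar_mul, apolar_C, apolar_X, pow_succ, pow_zero, one_mul,
    apolar_one, smul_eq_C_mul]
  simp only [map_add, pderiv_X, pderiv_pow, pderiv_C_mul, pderiv_ofNat, pderiv_natCast,
    pderiv_mul, pderiv_one, map_zero]
  apply MvPolynomial.funext
  intro x
  simp
  ring

lemma action2 (b0 b1 b2 : ℂ) :
    apolar (C b0 * X 0 ^ 2 + C b1 * (X 0 * X 1) + C b2 * X 1 ^ 2) P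
      = C (12 * (b0 * a0 + b1 * a1 + b2 * a2)) * X 0 ^ 2
        + C (24 * (b0 * a1 + b1 * a2 + b2 * a3)) * (X 0 * X 1)
        + C (12 * (b0 * a2 + b1 * a3 + b2 * a4)) * X 1 ^ 2 := by
  subst hPdef
  simp only [apolar_add, apolar_mul, apolar_C, apolar_X, pow_succ, pow_zero, one_mul,
    apolar_one, smul_eq_C_mul]
  simp only [map_add, pderiv_X, pderiv_pow, pderiv_C_mul, pderiv_ofNat, pderiv_natCast,
    pderiv_mul, pderiv_one, map_zero]
  apply MvPolynomial.funext
  intro x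
  simp
  ring

lemma action1 (b0 b1 : ℂ) :
    apolar (C b0 * X 0 + C b1 * X 1) P
      = C (4 * (b0 * a0 + b1 * a1)) * X 0 ^ 3 + C (12 * (b0 * a1 + b1 * a2)) * (X 0 ^ 2 * X 1)
        + C (12 * (b0 * a2 + b1 * a3)) * (X 0 * X 1 ^ 2)
        + C (4 * (b0 * a3 + b1 * a4)) * X 1 ^ 3 := by
  subst hPdef
  simp only [apolar_add, apolar_mul, apolar_C, apolar_X, pow_succ, pow_zero, one_mul,
    apolar_one, smul_eq_C_mul]
  simp only [map_add, pderiv_X, pderiv_pow, pderiv_C_mul, pderiv_ofNat, pderiv_natCast,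
    pderiv_mul, pderiv_one, map_zero]
  apply MvPolynomial.funext
  intro x
  simp
  ring

omit hPdef in lemma hom1shape (b0 b1 : ℂ) : (C b0 * X 0 + C b1 * X 1 : MvPolynomial (Fin 2) ℂ).IsHomogeneous 1 :=
  ((isHomogeneous_C _ b0).mul (isHomogeneous_X ℂ 0)).add
    ((isHomogeneous_C _ b1).mul (isHomogeneous_X ℂ 1))

omit hPdef in lemma hom2shape (b0 b1 b2 : ℂ) :
    (C b0 * X 0 ^ 2 + C b1 * (X 0 * X 1) + C b2 * X 1 ^ 2 :
      MvPolynomial (Fin 2) ℂ).IsHomogeneous 2 :=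
  (((isHomogeneous_C _ b0).mul ((isHomogeneous_X ℂ 0).pow 2)).add
    ((isHomogeneous_C _ b1).mul ((isHomogeneous_X ℂ 0).mul (isHomogeneous_X ℂ 1)))).add
    ((isHomogeneous_C _ b2).mul ((isHomogeneous_X ℂ 1).pow 2))

omit hPdef in lemma hom3shape (b0 b1 b2 b3 : ℂ) :
    (C b0 * X 0 ^ 3 + C b1 * (X 0 ^ 2 * X 1) + C b2 * (X 0 * X 1 ^ 2) + C b3 * X 1 ^ 3 :
      MvPolynomial (Fin 2) ℂ).IsHomogeneous 3 :=
  ((((isHomogeneous_C _ b0).mul ((isHomogeneous_X ℂ 0).pow 3)).add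
    ((isHomogeneous_C _ b1).mul (((isHomogeneous_X ℂ 0).pow 2).mul (isHomogeneous_X ℂ 1)))).add
    ((isHomogeneous_C _ b2).mul ((isHomogeneous_X ℂ 0).mul ((isHomogeneous_X ℂ 1).pow 2)))).add
    ((isHomogeneous_C _ b3).mul ((isHomogeneous_X ℂ 1).pow 3))

omit hPdef in lemma apolar_zero_right (Q : MvPolynomial (Fin 2) ℂ) : apolar Q 0 = 0 :=
  map_zero (diffOp Q)

lemma mem3 : ∃ Q, Q ≠ 0 ∧ Q.IsHomogeneous 3 ∧ apolar Q P = 0 := by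
  set M : Matrix (Fin 2) (Fin 4) ℂ := !![a0, a1, a2, a3; a1, a2, a3, a4] with hM
  have hni : ¬ Function.Injective M.mulVecLin := by
    intro h
    have := LinearMap.finrank_le_finrank_of_injective h
    rw [Module.finrank_fin_fun, Module.finrank_fin_fun] at this
    omega
  obtain ⟨x, y, hfeq, hxy⟩ := Function.not_injective_iff.mp hni
  set b : Fin 4 → ℂ := x - y with hb
  have hb0 : b ≠ 0 := sub_ne_zero.mpr hxy
  have hfb : M.mulVecLin b = 0 := by rw [hb, map_sub, hfeq, sub_self]
  have e0 : a0 * b 0 + a1 * b 1 + a2 * b 2 + a3 * b 3 = 0 := by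
    have := congrFun hfb 0
    simpa [M, Matrix.mulVecLin_apply, Matrix.mulVec, dotProduct, Fin.sum_univ_four]
      using this
  have e1 : a1 * b 0 + a2 * b 1 + a3 * b 2 + a4 * b 3 = 0 := by
    have := congrFun hfb 1
    simpa [M, Matrix.mulVecLin_apply, Matrix.mulVec, dotProduct, Fin.sum_univ_four]
      using this
  refine ⟨C (b 0) * X 0 ^ 3 + C (b 1) * (X 0 ^ 2 * X 1) + C (b 2) * (X 0 * X 1 ^ 2)
    + C (b 3) * X 1 ^ 3, ?_, hom3shape _ _ _ _, ?_⟩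
  · intro h
    obtain ⟨h1, h2, h3, h4⟩ := lin3 _ _ _ _ h
    exact hb0 (by funext i; fin_cases i <;> simpa)
  · rw [action3 a0 a1 a2 a3 a4 P hPdef]
    have z1 : 24 * (b 0 * a0 + b 1 * a1 + b 2 * a2 + b 3 * a3) = 0 := by linear_combination 24 * e0
    have z2 : 24 * (b 0 * a1 + b 1 * a2 + b 2 * a3 + b 3 * a4) = 0 := by linear_combination 24 * e1
    rw [z1, z2]
    simp

lemma step12 (h : ∃ Q, Q ≠ 0 ∧ Q.IsHomogeneous 1 ∧ apolar Q P = 0) :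
    ∃ Q, Q ≠ 0 ∧ Q.IsHomogeneous 2 ∧ apolar Q P = 0 := by
  obtain ⟨Q, h0, hh, ha⟩ := h
  exact ⟨X 0 * Q, mul_ne_zero (X_ne_zero 0) h0, (isHomogeneous_X ℂ 0).mul hh,
    by rw [apolar_mul, ha, apolar_zero_right]⟩

omit hPdef in lemma notmem0 (hP0 : P ≠ 0) : ¬ ∃ Q, Q ≠ 0 ∧ Q.IsHomogeneous 0 ∧ apolar Q P = 0 := by
  rintro ⟨Q, h0, hh, ha⟩
  obtain ⟨c, rfl⟩ := rep0 Q hh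
  rw [apolar_C] at ha
  have hc : c ≠ 0 := fun h => h0 (by rw [h, map_zero])
  exact hP0 ((smul_eq_zero.mp ha).resolve_left hc)

lemma mem2 (g3 : ℂ)
    (hg3 : g3 = a0 * a2 * a4 + 2 * a1 * a2 * a3 - a2 ^ 3 - a0 * a3 ^ 2 - a1 ^ 2 * a4) :
    (∃ Q, Q ≠ 0 ∧ Q.IsHomogeneous 2 ∧ apolar Q P = 0) ↔ g3 = 0 := by
  have hdet : (!![a0, a1, a2; a1, a2, a3; a2, a3, a4] : Matrix (Fin 3) (Fin 3) ℂ).det = g3 := by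
    rw [Matrix.det_fin_three]
    simp [Matrix.cons_val_zero, Matrix.cons_val_one]
    linear_combination -hg3
  constructor
  · rintro ⟨Q, h0, hh, ha⟩
    obtain ⟨b0, b1, b2, hQ⟩ := rep2 Q hh
    rw [hQ, action2 a0 a1 a2 a3 a4 P hPdef] at ha
    obtain ⟨e0, e1, e2⟩ := lin2 _ _ _ ha
    have f0 : b0 * a0 + b1 * a1 + b2 * a2 = 0 := by linear_combination e0 / 12
    have f1 : b0 * a1 + b1 * a2 + b2 * a3 = 0 := by linear_combination e1 / 24
    have f2 : b0 * a2 + b1 * a3 + b2 * a4 = 0 := by linear_combination e2 / 12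
    have hv : (![b0, b1, b2] : Fin 3 → ℂ) ≠ 0 := by
      intro h
      exact h0 (by rw [hQ, show b0 = 0 from congrFun h 0, show b1 = 0 from congrFun h 1,
        show b2 = 0 from congrFun h 2]; simp)
    have hmv : (!![a0, a1, a2; a1, a2, a3; a2, a3, a4] : Matrix (Fin 3) (Fin 3) ℂ).mulVec
        ![b0, b1, b2] = 0 := by
      funext i
      fin_cases i <;>
        simp [Matrix.mulVec, dotProduct, Fin.sum_univ_three] <;>
        [linear_combination f0; linear_combination f1; linear_combination f2]
    rw [← hdet]
    exact Matrix.exists_mulVec_eq_zero_iff.mp ⟨![b0, b1, b2], hv, hmv⟩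
  · intro hg0
    obtain ⟨v, hv, hmv⟩ := Matrix.exists_mulVec_eq_zero_iff.mpr (by rw [hdet, hg0])
    have e0 : v 0 * a0 + v 1 * a1 + v 2 * a2 = 0 := by
      have := congrFun hmv 0
      simp [Matrix.mulVec, dotProduct, Fin.sum_univ_three] at this
      linear_combination this
    have e1 : v 0 * a1 + v 1 * a2 + v 2 * a3 = 0 := by
      have := congrFun hmv 1
      simp [Matrix.mulVec, dotProduct, Fin.sum_univ_three] at this
      linear_combination this
    have e2 : v 0 * a2 + v 1 * a3 + v 2 * a4 = 0 := by
      have := congrFun hmv 2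
      simp [Matrix.mulVec, dotProduct, Fin.sum_univ_three] at this
      linear_combination this
    refine ⟨C (v 0) * X 0 ^ 2 + C (v 1) * (X 0 * X 1) + C (v 2) * X 1 ^ 2, ?_,
      hom2shape _ _ _, ?_⟩
    · intro h
      obtain ⟨h1, h2, h3⟩ := lin2 _ _ _ h
      exact hv (by funext i; fin_cases i <;> simpa)
    · rw [action2 a0 a1 a2 a3 a4 P hPdef]
      rw [show 12 * (v 0 * a0 + v 1 * a1 + v 2 * a2) = 0 by linear_combination 12 * e0,
        show 24 * (v 0 * a1 + v 1 * a2 + v 2 * a3) = 0 by linear_combination 24 * e1,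
        show 12 * (v 0 * a2 + v 1 * a3 + v 2 * a4) = 0 by linear_combination 12 * e2]
      simp

lemma mem1 (hP0 : P ≠ 0) :
    (∃ Q, Q ≠ 0 ∧ Q.IsHomogeneous 1 ∧ apolar Q P = 0) ↔
      (∃ lam : MvPolynomial (Fin 2) ℂ, lam.IsHomogeneous 1 ∧ lam ≠ 0 ∧ P = lam ^ 4) := by
  constructor
  · rintro ⟨Q, h0, hh, ha⟩
    obtain ⟨b0, b1, hQ⟩ := rep1 Q hh
    rw [hQ, action1 a0 a1 a2 a3 a4 P hPdef] at ha
    obtain ⟨e0, e1, e2, e3⟩ := lin3 _ _ _ _ ha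
    have f0 : b0 * a0 + b1 * a1 = 0 := by linear_combination e0 / 4
    have f1 : b0 * a1 + b1 * a2 = 0 := by linear_combination e1 / 12
    have f2 : b0 * a2 + b1 * a3 = 0 := by linear_combination e2 / 12
    have f3 : b0 * a3 + b1 * a4 = 0 := by linear_combination e3 / 4
    by_cases hb1 : b1 = 0
    · have hb0 : b0 ≠ 0 := by
        intro h; exact h0 (by rw [hQ, h, hb1]; simp)
      have ha0 : a0 = 0 := by
        have := f0; rw [hb1] at this; simpa [hb0] using this
      have ha1 : a1 = 0 := by
        have := f1; rw [hb1] at this; simpa [hb0] using this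
      have ha2 : a2 = 0 := by
        have := f2; rw [hb1] at this; simpa [hb0] using this
      have ha3 : a3 = 0 := by
        have := f3; rw [hb1] at this; simpa [hb0] using this
      have ha4 : a4 ≠ 0 := by
        intro h4
        exact hP0 (by rw [hPdef, ha0, ha1, ha2, ha3, h4]; simp)
      obtain ⟨z, hz⟩ := IsAlgClosed.exists_pow_nat_eq a4 (n := 4) (by norm_num)
      have hzne : z ≠ 0 := by
        intro h; rw [h] at hz; exact ha4 (by rw [← hz]; ring)
      refine ⟨C z * X 1, (isHomogeneous_C _ z).mul (isHomogeneous_X ℂ 1), ?_, ?_⟩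
      · intro h
        have := congrArg (eval ![0, 1]) h
        simp at this
        exact hzne this
      · apply MvPolynomial.funext
        intro x
        rw [hPdef, ha0, ha1, ha2, ha3]
        simp
        rw [← hz]; ring
    · have ha1 : a1 = -(b0 / b1) * a0 := by field_simp; linear_combination f0
      have ha2 : a2 = -(b0 / b1) * a1 := by field_simp; linear_combination f1
      have ha3 : a3 = -(b0 / b1) * a2 := by field_simp; linear_combination f2
      have ha4 : a4 = -(b0 / b1) * a3 := by field_simp; linear_combination f3
      have ha0 : a0 ≠ 0 := by
        intro h0a
        have h1a : a1 = 0 := by rw [ha1, h0a, mul_zero]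
        have h2a : a2 = 0 := by rw [ha2, h1a, mul_zero]
        have h3a : a3 = 0 := by rw [ha3, h2a, mul_zero]
        have h4a : a4 = 0 := by rw [ha4, h3a, mul_zero]
        exact hP0 (by rw [hPdef, h0a, h1a, h2a, h3a, h4a]; simp)
      obtain ⟨z, hz⟩ := IsAlgClosed.exists_pow_nat_eq a0 (n := 4) (by norm_num)
      have hzne : z ≠ 0 := by
        intro h; rw [h] at hz; exact ha0 (by rw [← hz]; ring)
      refine ⟨C z * X 0 + C (z * -(b0 / b1)) * X 1, hom1shape _ _, ?_, ?_⟩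
      · intro h
        have := congrArg (eval ![1, 0]) h
        simp at this
        exact hzne this
      · apply MvPolynomial.funext
        intro x
        rw [hPdef]
        simp
        rw [ha4, ha3, ha2, ha1, ← hz]
        ring
  · rintro ⟨lam, hlh, hl0, hP4⟩
    obtain ⟨c0, c1, hlam⟩ := rep1 lam hlh
    refine ⟨C c1 * X 0 + C (-c0) * X 1, ?_, hom1shape _ _, ?_⟩
    · intro h
      obtain ⟨h1, h2⟩ := lin1 _ _ h
      exact hl0 (by rw [hlam, h1, neg_eq_zero.mp h2]; simp)
    · rw [hP4, hlam]
      simp only [apolar_add, apolar_mul, apolar_C, apolar_X, smul_eq_C_mul]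
      simp only [map_add, pderiv_X, pderiv_pow, pderiv_C_mul, pderiv_ofNat, pderiv_natCast,
        pderiv_mul, pderiv_one, map_zero]
      apply MvPolynomial.funext
      intro x
      simp
      ring

end Action
end D1Aux
end

/-- For a nonzero binary quartic
`P = a₀X₀⁴ + 4a₁X₀³X₁ + 6a₂X₀²X₁² + 4a₃X₀X₁³ + a₄X₁⁴` and
`g₃(P) = a₀a₂a₄ + 2a₁a₂a₃ − a₂³ − a₀a₃² − a₁²a₄`:
`d₁(P) = 1` iff `P` is a fourth power of a nonzero linear form; `d₁(P) = 2` iff `g₃(P) = 0`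
and `P` is not a fourth power of a linear form; `d₁(P) = 3` iff `g₃(P) ≠ 0`. -/
theorem d1_quartic (a0 a1 a2 a3 a4 : ℂ)
    (P : MvPolynomial (Fin 2) ℂ)
    (hPdef : P = C a0 * X 0 ^ 4 + C (4 * a1) * X 0 ^ 3 * X 1 + C (6 * a2) * X 0 ^ 2 * X 1 ^ 2
      + C (4 * a3) * X 0 * X 1 ^ 3 + C a4 * X 1 ^ 4)
    (hP0 : P ≠ 0)
    (g3 : ℂ) (hg3 : g3 = a0 * a2 * a4 + 2 * a1 * a2 * a3 - a2 ^ 3 - a0 * a3 ^ 2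
      - a1 ^ 2 * a4) :
    (d1 P = 1 ↔ ∃ lam : MvPolynomial (Fin 2) ℂ,
        lam.IsHomogeneous 1 ∧ lam ≠ 0 ∧ P = lam ^ 4) ∧
    (d1 P = 2 ↔ g3 = 0 ∧
        ¬∃ lam : MvPolynomial (Fin 2) ℂ, lam.IsHomogeneous 1 ∧ P = lam ^ 4) ∧
    (d1 P = 3 ↔ g3 ≠ 0) := by
  set S : Set ℕ :=
      {d | ∃ Q : MvPolynomial (Fin 2) ℂ, Q ≠ 0 ∧ Q.IsHomogeneous d ∧ apolar Q P = 0} with hSdef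
  have hd1 : d1 P = sInf S := rfl
  have h3mem : 3 ∈ S := D1Aux.mem3 a0 a1 a2 a3 a4 P hPdef
  have h2iff : 2 ∈ S ↔ g3 = 0 := D1Aux.mem2 a0 a1 a2 a3 a4 P hPdef g3 hg3
  have h1iff : 1 ∈ S ↔ ∃ lam : MvPolynomial (Fin 2) ℂ,
      lam.IsHomogeneous 1 ∧ lam ≠ 0 ∧ P = lam ^ 4 := D1Aux.mem1 a0 a1 a2 a3 a4 P hPdef hP0
  have h0mem : 0 ∉ S := D1Aux.notmem0 P hP0
  have hstep : 1 ∈ S → 2 ∈ S := D1Aux.step12 a0 a1 a2 a3 a4 P hPdef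
  have hmem : sInf S ∈ S := Nat.sInf_mem ⟨3, h3mem⟩
  have hn0 : sInf S ≠ 0 := fun hz => h0mem (hz ▸ hmem)
  have hlam : (∃ lam : MvPolynomial (Fin 2) ℂ, lam.IsHomogeneous 1 ∧ P = lam ^ 4) ↔
      (∃ lam : MvPolynomial (Fin 2) ℂ, lam.IsHomogeneous 1 ∧ lam ≠ 0 ∧ P = lam ^ 4) := by
    constructor
    · rintro ⟨l, hl, he⟩
      exact ⟨l, hl, fun h => hP0 (by rw [he, h]; simp), he⟩
    · rintro ⟨l, hl, _, he⟩; exact ⟨l, hl, he⟩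
  refine ⟨?_, ?_, ?_⟩
  · rw [hd1, ← h1iff]
    constructor
    · intro h; rwa [h] at hmem
    · intro h; have := Nat.sInf_le h; omega
  · have key : sInf S = 2 ↔ 2 ∈ S ∧ 1 ∉ S := by
      constructor
      · intro h
        refine ⟨h ▸ hmem, fun h1 => ?_⟩
        have := Nat.sInf_le h1; omega
      · rintro ⟨h2, h1⟩
        have hle := Nat.sInf_le h2
        have hn1 : sInf S ≠ 1 := fun hz => h1 (hz ▸ hmem)
        omega
    rw [hd1, key]
    exact and_congr h2iff (not_congr (hlam.trans h1iff.symm).symm)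
  · have key : sInf S = 3 ↔ 2 ∉ S := by
      constructor
      · intro h h2; have := Nat.sInf_le h2; omega
      · intro h2
        have h1 : 1 ∉ S := fun h1 => h2 (hstep h1)
        have hle := Nat.sInf_le h3mem
        have hn1 : sInf S ≠ 1 := fun hz => h1 (hz ▸ hmem)
        have hn2 : sInf S ≠ 2 := fun hz => h2 (hz ▸ hmem)
        omega
    rw [hd1, key]
    exact not_congr h2iff
end
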